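/- The language of acyclic formulae of set theory is not context-free. -/

import Mathlib

/-- Alphabet of the usual syntax of set theory. -/
inductive Alph : Type
  | lb | rb | imp | all | deq | mem | w | prime | bot
deriving DecidableEq

/-- Well-formed formulae of set theory; variables are naturals (number of primes). -/
inductive Fm : Type
  | bot : Fm
  | eq : ℕ → ℕ → Fm
  | mem : ℕ → ℕ → Fm
  | imp : Fm → Fm → Fm
  | all : ℕ → Fm → Fm
deriving DecidableEq

/-- The string `w'^n` for the variable with `n` primes. -/
def varStr (n : ℕ) : List Alph := Alph.w :: List.replicate n Alph.prime

/-- The string of symbols of a formula. -/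
def Fm.str : Fm → List Alph
  | .bot => [Alph.bot]
  | .eq x y => varStr x ++ [Alph.deq] ++ varStr y
  | .mem x y => varStr x ++ [Alph.mem] ++ varStr y
  | .imp φ ψ => [Alph.lb] ++ φ.str ++ [Alph.imp] ++ ψ.str ++ [Alph.rb]
  | .all x φ => [Alph.lb, Alph.all] ++ varStr x ++ [Alph.rb] ++ φ.str

/-- Pairs `(x, y)` such that `x ∈ y` occurs as an atomic subformula. -/
def Fm.memPairs : Fm → Finset (ℕ × ℕ)
  | .bot => ∅
  | .eq _ _ => ∅
  | .mem x y => {(x, y)}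
  | .imp φ ψ => φ.memPairs ∪ ψ.memPairs
  | .all _ φ => φ.memPairs

/-- Pairs `(x, y)` such that `x ≐ y` occurs as an atomic subformula. -/
def Fm.eqPairs : Fm → Finset (ℕ × ℕ)
  | .bot => ∅
  | .eq x y => {(x, y)}
  | .mem _ _ => ∅
  | .imp φ ψ => φ.eqPairs ∪ ψ.eqPairs
  | .all _ φ => φ.eqPairs

/-- A formula is stratified if some integer assignment to variables satisfies
`σ x = σ y - 1` for subformulae `x ∈ y` and `σ x = σ y` for subformulae `x ≐ y`. -/
def Fm.Stratified (φ : Fm) : Prop :=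
  ∃ σ : ℕ → ℤ, (∀ p ∈ φ.memPairs, σ p.1 = σ p.2 - 1) ∧ (∀ p ∈ φ.eqPairs, σ p.1 = σ p.2)

/-- Tagged atomic subformulae: `(false, x, y)` for `x ≐ y` and `(true, x, y)` for `x ∈ y`. -/
def Fm.atoms : Fm → Finset (Bool × ℕ × ℕ)
  | .bot => ∅
  | .eq x y => {(false, x, y)}
  | .mem x y => {(true, x, y)}
  | .imp φ ψ => φ.atoms ∪ ψ.atoms
  | .all _ φ => φ.atoms

/-- The number of quantifiers `[∀x]` over the variable `x` occurring in a formula. -/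
def Fm.quantCount (x : ℕ) : Fm → ℕ
  | .bot => 0
  | .eq _ _ => 0
  | .mem _ _ => 0
  | .imp φ ψ => Fm.quantCount x φ + Fm.quantCount x ψ
  | .all y φ => (if y = x then 1 else 0) + Fm.quantCount x φ

/-- The variable `x` has a free occurrence in the formula. -/
def Fm.FreeIn (x : ℕ) : Fm → Prop
  | .bot => False
  | .eq a b => a = x ∨ b = x
  | .mem a b => a = x ∨ b = x
  | .imp φ ψ => Fm.FreeIn x φ ∨ Fm.FreeIn x ψ
  | .all y φ => y ≠ x ∧ Fm.FreeIn x φ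

/-- Variables appearing in a formula (including binders). -/
def Fm.vars : Fm → Finset ℕ
  | .bot => ∅
  | .eq x y => {x, y}
  | .mem x y => {x, y}
  | .imp φ ψ => φ.vars ∪ ψ.vars
  | .all x φ => insert x φ.vars

/-- A formula is acyclic if every variable is either always free or always bound by the
same (unique) quantifier, and there is no cycle of distinct atomic subformulae linking a
sequence of variables `x_0, …, x_n` with `x_0 = x_n`, `n ≥ 1`. -/
def Fm.Acyclic (φ : Fm) : Prop :=
  (∀ x ∈ φ.vars, Fm.quantCount x φ = 0 ∨ (Fm.quantCount x φ = 1 ∧ ¬ Fm.FreeIn x φ)) ∧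
  ¬ ∃ (n : ℕ) (x : Fin (n + 1) → ℕ) (α : Fin n → Bool × ℕ × ℕ),
      1 ≤ n ∧ x 0 = x (Fin.last n) ∧ Function.Injective α ∧
      ∀ i : Fin n, α i ∈ φ.atoms ∧
        ((α i).2 = (x i.castSucc, x i.succ) ∨ (α i).2 = (x i.succ, x i.castSucc))



universe uT
variable {T : Type uT}

namespace Pump
variable {g : ContextFreeGrammar.{uT} T}

inductive DerIn (g : ContextFreeGrammar.{uT} T) :
    List (Symbol T g.NT) → List (Symbol T g.NT) → ℕ → Prop
  | refl (u : List (Symbol T g.NT)) : DerIn g u u 0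
  | head {u v w n} : g.Produces u v → DerIn g v w n → DerIn g u w (n + 1)

lemma DerIn.derives {u v : List (Symbol T g.NT)} {n : ℕ} (h : DerIn g u v n) :
    g.Derives u v := by
  induction h with
  | refl => rfl
  | head p _ ih => exact p.trans_derives ih

lemma derives_iff_derIn {u v : List (Symbol T g.NT)} :
    g.Derives u v ↔ ∃ n, DerIn g u v n := by
  constructor
  · intro h
    induction h using Relation.ReflTransGen.head_induction_on with
    | refl => exact ⟨0, .refl _⟩
    | head p _ ih => exact ⟨ih.choose + 1, .head p ih.choose_spec⟩
  · rintro ⟨n, h⟩; exact h.derives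

lemma DerIn.trans {u v w : List (Symbol T g.NT)} {a b : ℕ}
    (h1 : DerIn g u v a) (h2 : DerIn g v w b) : DerIn g u w (a + b) := by
  induction h1 with
  | refl => simpa using h2
  | head p _ ih => exact (Nat.succ_add _ _) ▸ .head p (ih h2)

lemma DerIn.append_left {u v : List (Symbol T g.NT)} {n : ℕ}
    (h : DerIn g u v n) (p : List (Symbol T g.NT)) : DerIn g (p ++ u) (p ++ v) n := by
  induction h with
  | refl => exact .refl _
  | head pr _ ih => exact .head (pr.append_left p) ih

lemma DerIn.append_right {u v : List (Symbol T g.NT)} {n : ℕ}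
    (h : DerIn g u v n) (p : List (Symbol T g.NT)) : DerIn g (u ++ p) (v ++ p) n := by
  induction h with
  | refl => exact .refl _
  | head pr _ ih => exact .head (pr.append_right p) ih

lemma DerIn.concat {u1 v1 u2 v2 : List (Symbol T g.NT)} {a b : ℕ}
    (h1 : DerIn g u1 v1 a) (h2 : DerIn g u2 v2 b) :
    DerIn g (u1 ++ u2) (v1 ++ v2) (a + b) :=
  (h1.append_right u2).trans (h2.append_left v1)

lemma nt_mem_of_rewrites {N : Type} {r : ContextFreeRule T N} {u v : List (Symbol T N)}
    (h : r.Rewrites u v) : Symbol.nonterminal r.input ∈ u := by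
  induction h with
  | head s => simp
  | cons x _ ih => simp [ih]

/-- A string of terminals derives only to itself. -/
lemma DerIn.terminal_rigid {w : List T} {δ : List (Symbol T g.NT)} {n : ℕ}
    (h : DerIn g (List.map Symbol.terminal w) δ n) :
    δ = List.map Symbol.terminal w ∧ n = 0 := by
  cases h with
  | refl => exact ⟨rfl, rfl⟩
  | head p _ =>
    exfalso
    obtain ⟨r, _, hrw⟩ := p
    have := nt_mem_of_rewrites hrw
    simp only [List.mem_map] at this
    obtain ⟨t, _, ht⟩ := this
    cases ht

lemma rewrites_singleton {N : Type} {r : ContextFreeRule T N} {A : N} {v : List (Symbol T N)}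
    (h : r.Rewrites [Symbol.nonterminal A] v) : r.input = A ∧ v = r.output := by
  cases h with
  | head s => exact ⟨rfl, by simp⟩
  | cons x hrs => cases hrs

lemma DerIn.nt_start {A : g.NT} {δ : List (Symbol T g.NT)} {n : ℕ}
    (h : DerIn g [Symbol.nonterminal A] δ (n + 1)) :
    ∃ r ∈ g.rules, r.input = A ∧ DerIn g r.output δ n := by
  rcases h with _ | ⟨⟨r, hr, hrw⟩, hrest⟩
  obtain ⟨hin, rfl⟩ := rewrites_singleton hrw
  exact ⟨r, hr, hin, hrest⟩

/-- Split a derivation from a concatenation. -/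
lemma DerIn.split {γ1 γ2 δ : List (Symbol T g.NT)} {n : ℕ}
    (h : DerIn g (γ1 ++ γ2) δ n) :
    ∃ δ1 δ2 n1 n2, δ = δ1 ++ δ2 ∧ n1 + n2 = n ∧ DerIn g γ1 δ1 n1 ∧ DerIn g γ2 δ2 n2 := by
  induction n generalizing γ1 γ2 with
  | zero =>
    cases h
    exact ⟨γ1, γ2, 0, 0, rfl, rfl, .refl _, .refl _⟩
  | succ n ih =>
    rcases h with _ | ⟨⟨r, hr, hrw⟩, hrest⟩
    rcases hrw.exists_parts with ⟨p, q, hpq, rfl⟩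
    rw [List.append_assoc] at hpq
    rcases List.append_eq_append_iff.mp hpq with ⟨a', rfl, ha2⟩ | ⟨c', rfl, hc2⟩
    · have hprod : g.Produces γ2 (a' ++ r.output ++ q) := by
        rw [ha2, ← List.append_assoc]
        exact ⟨r, hr, r.rewrites_of_exists_parts a' q⟩
      have : DerIn g (γ1 ++ (a' ++ r.output ++ q)) δ n := by
        simpa [List.append_assoc] using hrest
      obtain ⟨δ1, δ2, n1, n2, rfl, hn, h1, h2⟩ := ih this
      exact ⟨δ1, δ2, n1, n2 + 1, rfl, by omega, h1, .head hprod h2⟩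
    · match c', hc2 with
      | [], hc2 =>
        have hg2 : γ2 = Symbol.nonterminal r.input :: q := by simpa using hc2.symm
        subst hg2
        have hprod : g.Produces (Symbol.nonterminal r.input :: q) (r.output ++ q) :=
          ⟨r, hr, by simpa using r.rewrites_of_exists_parts [] q⟩
        have : DerIn g ((p ++ []) ++ (r.output ++ q)) δ n := by
          simpa [List.append_assoc] using hrest
        obtain ⟨δ1, δ2, n1, n2, rfl, hn, h1, h2⟩ := ih this
        exact ⟨δ1, δ2, n1, n2 + 1, rfl, by omega, h1, .head hprod h2⟩
      | s :: c'', hc2 =>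
        have hs : s = Symbol.nonterminal r.input ∧ q = c'' ++ γ2 := by
          have := hc2
          simp only [List.cons_append, List.cons.injEq] at this
          exact ⟨this.1.symm, this.2⟩
        obtain ⟨rfl, rfl⟩ := hs
        have hprod : g.Produces (p ++ Symbol.nonterminal r.input :: c'')
            (p ++ r.output ++ c'') := by
          refine ⟨r, hr, ?_⟩
          have := r.rewrites_of_exists_parts p c''
          simpa [List.append_assoc] using this
        have : DerIn g ((p ++ r.output ++ c'') ++ γ2) δ n := by
          simpa [List.append_assoc] using hrest
        obtain ⟨δ1, δ2, n1, n2, rfl, hn, h1, h2⟩ := ih this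
        exact ⟨δ1, δ2, n1 + 1, n2, rfl, by omega, .head hprod h1, h2⟩

/-- Find a long part generated by one symbol. -/
lemma find {γ : List (Symbol T g.NT)} {wrd : List T} {n : ℕ} (c K' : ℕ)
    (h : DerIn g γ (List.map Symbol.terminal wrd) n)
    (hγ : γ.length ≤ c) (hlen : c * K' < wrd.length) (hK : 1 ≤ K') :
    ∃ (B : g.NT) (pre post w' : List T) (n' : ℕ),
      wrd = pre ++ w' ++ post ∧ K' < w'.length ∧ n' ≤ n ∧
      DerIn g [Symbol.nonterminal B] (List.map Symbol.terminal w') n' ∧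
      ∀ β m, DerIn g [Symbol.nonterminal B] β m →
        ∃ k ≤ n - n' + m,
          DerIn g γ (List.map Symbol.terminal pre ++ β ++ List.map Symbol.terminal post) k := by
  induction γ generalizing wrd n c with
  | nil =>
    exfalso
    have h0 : DerIn g (List.map Symbol.terminal ([] : List T)) (List.map Symbol.terminal wrd) n := by
      simpa using h
    obtain ⟨hδ, -⟩ := h0.terminal_rigid
    have hw : wrd = [] := by simpa using hδ
    subst hw
    simp at hlen
  | cons s γ' ih =>
    have hsplit : DerIn g ([s] ++ γ') (List.map Symbol.terminal wrd) n := h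
    obtain ⟨δ1, δ2, n1, n2, hδ, hn, h1, h2⟩ := hsplit.split
    obtain ⟨w1, w2, rfl, hm1, hm2⟩ := List.map_eq_append_iff.mp hδ
    rw [← hm1] at h1
    rw [← hm2] at h2
    by_cases hw1 : K' < w1.length
    · -- the first symbol generates a long part
      match s, h1 with
      | Symbol.terminal t, h1 =>
        exfalso
        have h0 : DerIn g (List.map Symbol.terminal [t]) (List.map Symbol.terminal w1) n1 := by
          simpa using h1
        obtain ⟨hδ', -⟩ := h0.terminal_rigid
        have hl := congrArg List.length hδ'
        simp at hl
        omega
      | Symbol.nonterminal B, h1 =>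
        refine ⟨B, [], w2, w1, n1, by simp, hw1, by omega, h1, ?_⟩
        intro β m hβ
        refine ⟨m + n2, by omega, ?_⟩
        simpa using hβ.concat h2
    · -- recurse on the tail
      push_neg at hw1
      cases c with
      | zero => simp at hγ
      | succ c =>
        have hlen2 : c * K' < w2.length := by
          have hl : (w1 ++ w2).length = w1.length + w2.length := by simp
          have hsm : (c + 1) * K' = c * K' + K' := by ring
          omega
        obtain ⟨B, pre, post, w', n', hw2eq, hlw, hn', hder, hsub⟩ :=
          ih (c := c) h2 (by simpa using hγ) hlen2
        refine ⟨B, w1 ++ pre, post, w', n', by simp [hw2eq, List.append_assoc], hlw, by omega, hder, ?_⟩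
        intro β m hβ
        obtain ⟨k, hk, hd⟩ := hsub β m hβ
        refine ⟨n1 + k, by omega, ?_⟩
        have := h1.concat hd
        simpa [List.append_assoc] using this

/-- Bound on lengths of outputs of rules. -/
noncomputable def Kc (g : ContextFreeGrammar.{uT} T) : ℕ :=
  (g.rules.sup fun r => r.output.length) + 2

lemma two_le_Kc : 2 ≤ Kc g := Nat.le_add_left 2 _

lemma output_len_le_Kc {r : ContextFreeRule T g.NT} (hr : r ∈ g.rules) :
    r.output.length ≤ Kc g :=
  le_trans (Finset.le_sup (f := fun r => r.output.length) hr) (Nat.le_add_right _ 2)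

/-- Nonterminals that appear as inputs of rules. -/
noncomputable def inputs (g : ContextFreeGrammar.{uT} T) : Finset g.NT :=
  letI := Classical.decEq g.NT
  g.rules.image ContextFreeRule.input

lemma mem_inputs {r : ContextFreeRule T g.NT} (hr : r ∈ g.rules) : r.input ∈ inputs g := by
  classical
  unfold inputs
  convert Finset.mem_image.mpr ⟨r, hr, rfl⟩

/-- `Link A w n B w' n'`: within a derivation of `w` from `A` in `n` steps, there is an
inner derivation of `w'` from `B` in `n' < n` steps, and the context can be composed with
any derivation from `B`. -/
def Link (g : ContextFreeGrammar.{uT} T) (A : g.NT) (wrd : List T) (n : ℕ)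
    (B : g.NT) (w' : List T) (n' : ℕ) : Prop :=
  n' < n ∧ ∃ pre post, wrd = pre ++ w' ++ post ∧
    ∀ β m, DerIn g [Symbol.nonterminal B] β m →
      ∃ k ≤ n - n' + m, DerIn g [Symbol.nonterminal A]
        (List.map Symbol.terminal pre ++ β ++ List.map Symbol.terminal post) k

lemma DerIn.zero_eq {u v : List (Symbol T g.NT)} (h : DerIn g u v 0) : u = v := by
  cases h; rfl

lemma Link.trans {A B C : g.NT} {w w' w'' : List T} {n n' n'' : ℕ}
    (h1 : Link g A w n B w' n') (h2 : Link g B w' n' C w'' n'') :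
    Link g A w n C w'' n'' := by
  obtain ⟨hn1, pre1, post1, rfl, sub1⟩ := h1
  obtain ⟨hn2, pre2, post2, rfl, sub2⟩ := h2
  refine ⟨by omega, pre1 ++ pre2, post2 ++ post1, by simp [List.append_assoc], ?_⟩
  intro β m hβ
  obtain ⟨k2, hk2, hd2⟩ := sub2 β m hβ
  obtain ⟨k1, hk1, hd1⟩ := sub1 _ k2 hd2
  refine ⟨k1, by omega, ?_⟩
  simpa [List.append_assoc] using hd1

/-- One step down a tall derivation. -/
lemma path {A : g.NT} {wrd : List T} {n j : ℕ}
    (h : DerIn g [Symbol.nonterminal A] (List.map Symbol.terminal wrd) n)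
    (hw : Kc g ^ j < wrd.length) (hj : 1 ≤ j) :
    ∃ B w' n', Link g A wrd n B w' n' ∧
      DerIn g [Symbol.nonterminal B] (List.map Symbol.terminal w') n' ∧
      B ∈ inputs g ∧ Kc g ^ (j - 1) < w'.length := by
  have hKpos : 1 ≤ Kc g ^ (j - 1) := Nat.one_le_pow _ _ (by have := two_le_Kc (g := g); omega)
  cases n with
  | zero =>
    exfalso
    have heq := h.zero_eq
    have hlen : wrd.length = 1 := by
      have := congrArg List.length heq
      simpa using this.symm
    have : 1 ≤ Kc g ^ j := Nat.one_le_pow _ _ (by have := two_le_Kc (g := g); omega)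
    omega
  | succ n1 =>
    obtain ⟨r, hr, hin, hrest⟩ := h.nt_start
    have hc : r.output.length ≤ Kc g := output_len_le_Kc hr
    have hmul : Kc g * Kc g ^ (j - 1) < wrd.length := by
      have : Kc g * Kc g ^ (j - 1) = Kc g ^ j := by
        rw [← pow_succ']
        congr 1
        omega
      omega
    obtain ⟨B, pre, post, w', n', hweq, hlw, hn', hder, hsub⟩ :=
      find (Kc g) (Kc g ^ (j - 1)) hrest hc hmul hKpos
    refine ⟨B, w', n', ⟨by omega, pre, post, hweq, ?_⟩, hder, ?_, hlw⟩
    · intro β m hβ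
      obtain ⟨k, hk, hd⟩ := hsub β m hβ
      refine ⟨k + 1, by omega, ?_⟩
      exact DerIn.head ⟨r, hr, hin ▸ ContextFreeRule.Rewrites.input_output (r := r)⟩ hd
    · -- B ∈ inputs
      cases n' with
      | zero =>
        exfalso
        have heq := hder.zero_eq
        have := congrArg List.length heq
        simp at this
        omega
      | succ n'' =>
        obtain ⟨r', hr', hin', -⟩ := hder.nt_start
        exact hin' ▸ mem_inputs hr'

/-- The descending chain of linked subderivations. -/
lemma chain {j : ℕ} : ∀ {A : g.NT} {wrd : List T} {n : ℕ},
    DerIn g [Symbol.nonterminal A] (List.map Symbol.terminal wrd) n →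
    Kc g ^ j < wrd.length →
    ∃ f : ℕ → g.NT × List T × ℕ, f 0 = (A, wrd, n) ∧
      (∀ i ≤ j, DerIn g [Symbol.nonterminal (f i).1]
        (List.map Symbol.terminal (f i).2.1) (f i).2.2) ∧
      (∀ i < j, Link g (f i).1 (f i).2.1 (f i).2.2 (f (i+1)).1 (f (i+1)).2.1 (f (i+1)).2.2 ∧
        (f (i+1)).1 ∈ inputs g) := by
  induction j with
  | zero =>
    intro A wrd n h _
    refine ⟨fun _ => (A, wrd, n), rfl, fun i hi => h, fun i hi => by omega⟩
  | succ j ih =>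
    intro A wrd n h hw
    obtain ⟨B, w', n', hlink, hder, hB, hlen⟩ := path h hw (by omega)
    have hlen' : Kc g ^ j < w'.length := by simpa using hlen
    obtain ⟨f', hf0, hders, hlinks⟩ := ih hder hlen'
    refine ⟨fun i => if i = 0 then (A, wrd, n) else f' (i - 1), by simp, ?_, ?_⟩
    · intro i hi
      cases i with
      | zero => simpa using h
      | succ i => simpa using hders i (by omega)
    · intro i hi
      cases i with
      | zero =>
        simpa [hf0] using And.intro hlink hB
      | succ i =>
        simpa using hlinks i (by omega)

lemma append_flatten_replicate_comm {α : Type*} (n : ℕ) (x : List α) :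
    x ++ (List.replicate n x).flatten = (List.replicate n x).flatten ++ x := by
  induction n with
  | zero => simp
  | succ n ih =>
    rw [List.replicate_succ, List.flatten_cons]
    calc x ++ (x ++ (List.replicate n x).flatten)
        = x ++ ((List.replicate n x).flatten ++ x) := by rw [ih]
      _ = (x ++ (List.replicate n x).flatten) ++ x := by rw [List.append_assoc]

lemma flatten_replicate_succ' {α : Type*} (n : ℕ) (x : List α) :
    (List.replicate (n + 1) x).flatten = (List.replicate n x).flatten ++ x := by
  rw [List.replicate_succ, List.flatten_cons, append_flatten_replicate_comm]

lemma chain_link {j : ℕ} {f : ℕ → g.NT × List T × ℕ}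
    (hlinks : ∀ i < j, Link g (f i).1 (f i).2.1 (f i).2.2
      (f (i+1)).1 (f (i+1)).2.1 (f (i+1)).2.2) :
    ∀ d a, 1 ≤ d → a + d ≤ j →
      Link g (f a).1 (f a).2.1 (f a).2.2 (f (a+d)).1 (f (a+d)).2.1 (f (a+d)).2.2 := by
  intro d
  induction d with
  | zero => omega
  | succ d ih =>
    intro a _ hle
    cases d with
    | zero => exact hlinks a (by omega)
    | succ d =>
      have h1 := ih a (by omega) (by omega)
      have h2 := hlinks (a + (d+1)) (by omega)
      have : a + (d + 1) + 1 = a + (d + 1 + 1) := by omega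
      exact this ▸ h1.trans h2

theorem weak_pumping (g : ContextFreeGrammar.{uT} T) :
    ∃ p, 1 ≤ p ∧ ∀ z ∈ g.language, p ≤ z.length →
      ∃ u v m x y : List T, z = u ++ v ++ m ++ x ++ y ∧ 1 ≤ v.length + x.length ∧
        ∀ n : ℕ, u ++ (List.replicate n v).flatten ++ m ++ (List.replicate n x).flatten ++ y
          ∈ g.language := by
  classical
  set M := (inputs g).card with hM
  refine ⟨Kc g ^ (M + 2), Nat.one_le_pow _ _ (by have := two_le_Kc (g := g); omega), ?_⟩
  intro z hz hlen
  -- minimal length derivation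
  have hex : ∃ n, DerIn g [Symbol.nonterminal g.initial] (List.map Symbol.terminal z) n :=
    derives_iff_derIn.mp hz
  obtain ⟨n0, hn0, hmin⟩ := (Nat.lt_wfRel.wf).has_min _ hex
  change ∀ x, _ → ¬ x < n0 at hmin
  -- tall derivation
  have hKz : Kc g ^ (M + 1) < z.length := by
    have h2K : 2 ≤ Kc g := two_le_Kc
    have : Kc g ^ (M + 1) * 2 ≤ Kc g ^ (M + 1) * Kc g := Nat.mul_le_mul_left _ h2K
    have hpow : Kc g ^ (M + 1) * Kc g = Kc g ^ (M + 2) := by ring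
    have hpos : 1 ≤ Kc g ^ (M + 1) := Nat.one_le_pow _ _ (by omega)
    omega
  obtain ⟨f, hf0, hders, hlinks⟩ := chain (j := M + 1) hn0 hKz
  -- pigeonhole
  have hmaps : ∀ i ∈ Finset.Icc 1 (M + 1), (f i).1 ∈ inputs g := by
    intro i hi
    simp only [Finset.mem_Icc] at hi
    have := (hlinks (i - 1) (by omega)).2
    have hi1 : i - 1 + 1 = i := by omega
    rwa [hi1] at this
  have hcard : (inputs g).card < (Finset.Icc 1 (M + 1)).card := by
    rw [Nat.card_Icc]
    omega
  obtain ⟨i1, hi1, i2, hi2, hne, hlab⟩ :=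
    Finset.exists_ne_map_eq_of_card_lt_of_maps_to hcard hmaps
  simp only [Finset.mem_Icc] at hi1 hi2
  -- wlog i1 < i2
  wlog hlt : i1 < i2 generalizing i1 i2
  · exact this i2 i1 hne.symm hlab.symm hi2 hi1 (by omega)
  have Lbig := chain_link (fun i hi => (hlinks i hi).1) i1 0 (by omega) (by omega)
  have Lmid := chain_link (fun i hi => (hlinks i hi).1) (i2 - i1) i1 (by omega) (by omega)
  rw [show (0 + i1) = i1 by omega] at Lbig
  rw [show (i1 + (i2 - i1)) = i2 by omega] at Lmid
  obtain ⟨hnb, u, yy, hzeq, subB⟩ := Lbig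
  obtain ⟨hnm, v, xx, hmeq, subM⟩ := Lmid
  rw [hf0] at hzeq subB hnb
  simp only at hzeq subB hnb
  refine ⟨u, v, (f i2).2.1, xx, yy, ?_, ?_, ?_⟩
  · rw [hzeq, hmeq]
    simp [List.append_assoc]
  · -- nonemptiness via minimality
    by_contra hno
    push_neg at hno
    have hv : v = [] := by
      have := List.length_eq_zero_iff.mp (by omega : v.length = 0); exact this
    have hx : xx = [] := by
      have := List.length_eq_zero_iff.mp (by omega : xx.length = 0); exact this
    subst hv hx
    simp only [List.nil_append, List.append_nil] at hmeq
    have hd2 : DerIn g [Symbol.nonterminal (f i1).1]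
        (List.map Symbol.terminal (f i2).2.1) (f i2).2.2 := by
      rw [hlab]; exact hders i2 (by omega)
    obtain ⟨k, hk, hd⟩ := subB _ _ hd2
    have hz' : List.map (Symbol.terminal : T → Symbol T g.NT) u ++
        List.map Symbol.terminal (f i2).2.1 ++
        List.map Symbol.terminal yy = List.map Symbol.terminal z := by
      rw [hzeq, hmeq]; simp
    rw [hz'] at hd
    exact hmin k hd (by omega)
  · -- pumping
    intro t
    have key : ∀ s : ℕ, ∃ mE, DerIn g [Symbol.nonterminal (f i1).1]
        (List.map Symbol.terminal ((List.replicate s v).flatten ++ (f i2).2.1 ++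
          (List.replicate s xx).flatten)) mE := by
      intro s
      induction s with
      | zero =>
        refine ⟨(f i2).2.2, ?_⟩
        rw [hlab]
        simpa using hders i2 (by omega)
      | succ s ihs =>
        obtain ⟨mE, hmE⟩ := ihs
        have hmE2 : DerIn g [Symbol.nonterminal (f i2).1]
            (List.map Symbol.terminal ((List.replicate s v).flatten ++ (f i2).2.1 ++
              (List.replicate s xx).flatten)) mE := hlab ▸ hmE
        obtain ⟨k, hk, hd⟩ := subM _ _ hmE2
        refine ⟨k, ?_⟩
        rw [List.replicate_succ, List.flatten_cons, flatten_replicate_succ']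
        simpa [List.append_assoc, List.map_append] using hd
    obtain ⟨mE, hmE⟩ := key t
    obtain ⟨k, hk, hd⟩ := subB _ _ hmE
    rw [ContextFreeGrammar.mem_language_iff]
    have := hd.derives
    simpa [List.append_assoc, List.map_append] using this

end Pump
section FrontEnd

/-- Flat formulas: a block of universal quantifiers over `⊥`. -/
def flatFm : List ℕ → Fm
  | [] => .bot
  | a :: l => .all a (flatFm l)

lemma flatFm_str (l : List ℕ) :
    (flatFm l).str =
      l.flatMap (fun a => [Alph.lb, Alph.all] ++ varStr a ++ [Alph.rb]) ++ [Alph.bot] := by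
  induction l with
  | nil => simp [flatFm, Fm.str]
  | cons a l ih => simp [flatFm, Fm.str, ih]

lemma flat_of_no_imp {φ : Fm} (h1 : Alph.imp ∉ φ.str) (h2 : Alph.deq ∉ φ.str)
    (h3 : Alph.mem ∉ φ.str) : ∃ l, φ = flatFm l := by
  induction φ with
  | bot => exact ⟨[], rfl⟩
  | eq a b => exact absurd (by simp [Fm.str]) h2
  | mem a b => exact absurd (by simp [Fm.str]) h3
  | imp φ ψ ihφ ihψ => exact absurd (by simp [Fm.str]) h1
  | all a φ ih =>
    obtain ⟨l, rfl⟩ := ih (fun h => h1 (by simp [Fm.str, h]))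
      (fun h => h2 (by simp [Fm.str, h])) (fun h => h3 (by simp [Fm.str, h]))
    exact ⟨a :: l, rfl⟩

lemma count_varStr (c : Alph) (a : ℕ) :
    (varStr a).count c =
      (if c = Alph.w then 1 else 0) + (if c = Alph.prime then a else 0) := by
  rcases c <;> simp [varStr, List.count_cons, List.count_replicate] <;> rfl

lemma count_flatFm (c : Alph) (l : List ℕ) :
    (flatFm l).str.count c =
      (if c = Alph.bot then 1 else 0) +
      (if c = Alph.lb then l.length else 0) +
      (if c = Alph.all then l.length else 0) +
      (if c = Alph.rb then l.length else 0) +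
      (if c = Alph.w then l.length else 0) +
      (if c = Alph.prime then l.sum else 0) := by
  induction l with
  | nil => rcases c <;> simp [flatFm, Fm.str] <;> rfl
  | cons a l ih =>
    have : (flatFm (a :: l)).str =
        ([Alph.lb, Alph.all] ++ varStr a ++ [Alph.rb]) ++ (flatFm l).str := by
      rw [flatFm_str, flatFm_str]
      simp [List.append_assoc]
    rw [this, List.count_append, ih]
    rcases c <;> simp [List.count_append, List.count_cons, count_varStr] <;> omega

lemma flatFm_quantCount (x : ℕ) (l : List ℕ) :
    Fm.quantCount x (flatFm l) = l.count x := by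
  induction l with
  | nil => simp [flatFm, Fm.quantCount]
  | cons a l ih =>
    simp only [flatFm, Fm.quantCount, ih, List.count_cons]
    by_cases h : a = x <;> simp [h] <;> omega

lemma flatFm_not_freeIn (x : ℕ) (l : List ℕ) : ¬ Fm.FreeIn x (flatFm l) := by
  induction l with
  | nil => simp [flatFm, Fm.FreeIn]
  | cons a l ih => rintro ⟨-, h⟩; exact ih h

lemma flatFm_vars (l : List ℕ) : (flatFm l).vars = l.toFinset := by
  induction l with
  | nil => simp [flatFm, Fm.vars]
  | cons a l ih => simp [flatFm, Fm.vars, ih]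

lemma flatFm_atoms (l : List ℕ) : (flatFm l).atoms = ∅ := by
  induction l with
  | nil => simp [flatFm, Fm.atoms]
  | cons a l ih => simpa [flatFm, Fm.atoms] using ih

lemma flatFm_acyclic_iff (l : List ℕ) : (flatFm l).Acyclic ↔ l.Nodup := by
  constructor
  · rintro ⟨h1, -⟩
    rw [List.nodup_iff_count_le_one]
    intro a
    by_cases ha : a ∈ l
    · have hv : a ∈ (flatFm l).vars := by rw [flatFm_vars]; exact List.mem_toFinset.mpr ha
      rcases h1 a hv with h | ⟨h, -⟩
      · rw [flatFm_quantCount] at h; omega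
      · rw [flatFm_quantCount] at h; omega
    · rw [List.count_eq_zero_of_not_mem ha]; omega
  · intro hnd
    constructor
    · intro x hx
      rw [flatFm_vars, List.mem_toFinset] at hx
      right
      refine ⟨?_, flatFm_not_freeIn x l⟩
      rw [flatFm_quantCount]
      exact List.count_eq_one_of_mem hnd hx
    · rintro ⟨n, x, α, hn, -, -, hall⟩
      have := (hall ⟨0, by omega⟩).1
      rw [flatFm_atoms] at this
      simp at this

lemma length_eq_sum_counts (L : List Alph) :
    L.length = L.count Alph.lb + L.count Alph.rb + L.count Alph.imp + L.count Alph.all +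
      L.count Alph.deq + L.count Alph.mem + L.count Alph.w + L.count Alph.prime +
      L.count Alph.bot := by
  induction L with
  | nil => simp
  | cons c L ih => rcases c <;> simp [List.count_cons, ih] <;> omega

lemma finset_range_sum_le (s : Finset ℕ) : ∑ i ∈ Finset.range s.card, i ≤ ∑ x ∈ s, x := by
  induction s using Finset.strongInduction with
  | _ s ih =>
    rcases s.eq_empty_or_nonempty with rfl | hne
    · simp
    · have hm : s.max' hne ∈ s := s.max'_mem hne
      have hsub : s ⊆ Finset.range (s.max' hne + 1) := fun x hx =>
        Finset.mem_range.mpr (by have := Finset.le_max' s x hx; omega)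
      have hcard : s.card ≤ s.max' hne + 1 := by
        simpa using Finset.card_le_card hsub
      have herase := ih (s.erase (s.max' hne)) (Finset.erase_ssubset hm)
      have hce : (s.erase (s.max' hne)).card = s.card - 1 := Finset.card_erase_of_mem hm
      have hsum : ∑ x ∈ s, x = s.max' hne + ∑ x ∈ s.erase (s.max' hne), x :=
        (Finset.add_sum_erase _ _ hm).symm
      have hcard1 : 1 ≤ s.card := Finset.card_pos.mpr hne
      have hr : ∑ i ∈ Finset.range s.card, i =
          (∑ i ∈ Finset.range (s.card - 1), i) + (s.card - 1) := by
        have h' : s.card = (s.card - 1) + 1 := by omega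
        rw [h', Finset.sum_range_succ]
        simp
      rw [hce] at herase
      omega

lemma nodup_sum_ge (l : List ℕ) (h : l.Nodup) :
    ∑ i ∈ Finset.range l.length, i ≤ l.sum := by
  have h1 : l.toFinset.card = l.length := List.toFinset_card_of_nodup h
  have h2 : ∑ x ∈ l.toFinset, x = l.sum := by
    have := List.sum_toFinset (fun x : ℕ => x) h
    simpa using this
  calc ∑ i ∈ Finset.range l.length, i = ∑ i ∈ Finset.range l.toFinset.card, i := by rw [h1]
    _ ≤ ∑ x ∈ l.toFinset, x := finset_range_sum_le _
    _ = l.sum := h2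

lemma list_range_sum (k : ℕ) : (List.range k).sum = ∑ i ∈ Finset.range k, i := by
  induction k with
  | zero => simp
  | succ k ih => rw [List.range_succ, Finset.sum_range_succ, List.sum_append, ih]; simp

lemma count_flatten_replicate {α : Type*} [DecidableEq α] (c : α) (n : ℕ) (v : List α) :
    (List.replicate n v).flatten.count c = n * v.count c := by
  induction n with
  | zero => simp
  | succ n ih => rw [List.replicate_succ, List.flatten_cons, List.count_append, ih]; ring

end FrontEnd
lemma arith_contra (a b : ℕ)
    (h : (2*a+2*b+2) * (2*a+2*b+1) ≤ 2*a + 2*((2*a+2*b+2)*b)) : False := by nlinarith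

/-- The language of acyclic formulae of set theory is not context-free. -/
theorem acyclic_not_contextFree :
    ¬ Language.IsContextFree {s : List Alph | ∃ φ : Fm, φ.Acyclic ∧ φ.str = s} := by
  rintro ⟨g, hg⟩
  obtain ⟨p, hp1, hpump⟩ := Pump.weak_pumping g
  have hmemL : ∀ s : List Alph, s ∈ g.language ↔ ∃ φ : Fm, φ.Acyclic ∧ φ.str = s := by
    intro s
    rw [hg]
    rfl
  set k := p with hk
  set zl := List.range k with hzl
  set z := (flatFm zl).str with hzdef
  have hzmem : z ∈ g.language := by
    rw [hmemL]
    exact ⟨flatFm zl, (flatFm_acyclic_iff zl).mpr (by rw [hzl]; exact List.nodup_range), rfl⟩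
  have hzlb : z.count Alph.lb = k := by
    rw [hzdef, count_flatFm]
    simp [hzl]
  have hzlen : p ≤ z.length := by
    have h2 := List.count_le_length (a := Alph.lb) (l := z)
    omega
  obtain ⟨u, v, m, x, y, hsplit, hvx, hpmp⟩ := hpump z hzmem hzlen
  set A : Alph → ℕ := fun c => u.count c + m.count c + y.count c with hA
  set B : Alph → ℕ := fun c => v.count c + x.count c with hB
  have hcnt : ∀ (c : Alph) (n : ℕ),
      ((u ++ (List.replicate n v).flatten ++ m ++ (List.replicate n x).flatten ++ y).count c)
        = A c + n * B c := by
    intro c n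
    simp only [List.count_append, count_flatten_replicate, hA, hB]
    ring
  have hczfn : ∀ c : Alph, z.count c = A c + B c := by
    intro c
    rw [hsplit]
    simp only [List.count_append, hA, hB]
    ring
  -- counts of z
  have hcall : z.count Alph.all = k := by rw [hzdef, count_flatFm]; simp [hzl]
  have hcrb : z.count Alph.rb = k := by rw [hzdef, count_flatFm]; simp [hzl]
  have hcw : z.count Alph.w = k := by rw [hzdef, count_flatFm]; simp [hzl]
  have hcbot : z.count Alph.bot = 1 := by rw [hzdef, count_flatFm]; simp [hzl]
  have hcpr : z.count Alph.prime = ∑ i ∈ Finset.range k, i := by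
    rw [hzdef, count_flatFm]; simp [hzl, list_range_sum]
  have hcimp : z.count Alph.imp = 0 := by rw [hzdef, count_flatFm]; simp
  have hcdeq : z.count Alph.deq = 0 := by rw [hzdef, count_flatFm]; simp
  have hcmem : z.count Alph.mem = 0 := by rw [hzdef, count_flatFm]; simp
  -- characterization of pumped strings
  have hchar : ∀ n : ℕ, ∃ l : List ℕ, l.Nodup ∧
      A Alph.lb + n * B Alph.lb = l.length ∧ A Alph.all + n * B Alph.all = l.length ∧
      A Alph.rb + n * B Alph.rb = l.length ∧ A Alph.w + n * B Alph.w = l.length ∧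
      A Alph.bot + n * B Alph.bot = 1 ∧ A Alph.prime + n * B Alph.prime = l.sum := by
    intro n
    have hsn := hpmp n
    rw [hmemL] at hsn
    obtain ⟨φ, hac, hstr⟩ := hsn
    have hno : ∀ c : Alph, z.count c = 0 → c ∉ φ.str := by
      intro c hc
      rw [hstr]
      have h1 := hczfn c
      have h2 := hcnt c n
      have hBc : B c = 0 := by omega
      have hAc : A c = 0 := by omega
      rw [← List.count_eq_zero]
      rw [h2, hBc, hAc]
      ring
    obtain ⟨l, rfl⟩ := flat_of_no_imp (hno Alph.imp hcimp) (hno Alph.deq hcdeq)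
      (hno Alph.mem hcmem)
    refine ⟨l, (flatFm_acyclic_iff l).mp hac, ?_, ?_, ?_, ?_, ?_, ?_⟩ <;>
    · rw [← hcnt _ n, ← hstr, count_flatFm]
      simp
  obtain ⟨l0, hnd0, h0lb, h0all, h0rb, h0w, h0bot, h0pr⟩ := hchar 0
  simp only [Nat.zero_mul, Nat.add_zero] at h0lb h0all h0rb h0w h0bot h0pr
  -- relations between A and B
  have hklb := hzlb ▸ hczfn Alph.lb
  have hkall := hcall ▸ hczfn Alph.all
  have hkrb := hcrb ▸ hczfn Alph.rb
  have hkw := hcw ▸ hczfn Alph.w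
  have hkbot := hcbot ▸ hczfn Alph.bot
  have hkpr := hcpr ▸ hczfn Alph.prime
  by_cases hd : B Alph.w = 0
  · -- v and x consist only of primes; deletion makes the sum of variables too small
    have hBlb : B Alph.lb = 0 := by omega
    have hBall : B Alph.all = 0 := by omega
    have hBrb : B Alph.rb = 0 := by omega
    have hBbot : B Alph.bot = 0 := by omega
    have hBimp : B Alph.imp = 0 := by
      have := hcimp ▸ hczfn Alph.imp
      omega
    have hBdeq : B Alph.deq = 0 := by
      have := hcdeq ▸ hczfn Alph.deq
      omega
    have hBmem : B Alph.mem = 0 := by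
      have := hcmem ▸ hczfn Alph.mem
      omega
    have hBpr : 1 ≤ B Alph.prime := by
      have hv := length_eq_sum_counts v
      have hx := length_eq_sum_counts x
      have : B Alph.lb = v.count Alph.lb + x.count Alph.lb := by rw [hB]
      have : B Alph.prime = v.count Alph.prime + x.count Alph.prime := by rw [hB]
      have e1 : B Alph.lb = v.count Alph.lb + x.count Alph.lb := by rw [hB]
      have e2 : B Alph.rb = v.count Alph.rb + x.count Alph.rb := by rw [hB]
      have e3 : B Alph.imp = v.count Alph.imp + x.count Alph.imp := by rw [hB]
      have e4 : B Alph.all = v.count Alph.all + x.count Alph.all := by rw [hB]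
      have e5 : B Alph.deq = v.count Alph.deq + x.count Alph.deq := by rw [hB]
      have e6 : B Alph.mem = v.count Alph.mem + x.count Alph.mem := by rw [hB]
      have e7 : B Alph.w = v.count Alph.w + x.count Alph.w := by rw [hB]
      have e8 : B Alph.prime = v.count Alph.prime + x.count Alph.prime := by rw [hB]
      have e9 : B Alph.bot = v.count Alph.bot + x.count Alph.bot := by rw [hB]
      omega
    have hlen0 : l0.length = k := by omega
    have hsum0 := nodup_sum_ge l0 hnd0
    rw [hlen0] at hsum0
    omega
  · -- pumping up blows up the number of distinct variables beyond the available primes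
    set a := ∑ i ∈ Finset.range k, i with ha
    set b := B Alph.prime with hb
    set n := 2 * a + 2 * b + 2 with hn
    obtain ⟨l, hnd, hlb, hall, hrb, hw, hbot, hpr⟩ := hchar n
    have hst1 : n ≤ l.length := by
      have h1 : n * 1 ≤ n * B Alph.w := Nat.mul_le_mul_left n (by omega)
      omega
    have key1 : (∑ i ∈ Finset.range n, i) ≤ l.sum :=
      le_trans (Finset.sum_le_sum_of_subset (Finset.range_subset_range.mpr hst1)) (nodup_sum_ge l hnd)
    have key2 : l.sum ≤ a + n * b := by omega
    have key3 := Finset.sum_range_id_mul_two n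
    have hfinal : n * (n - 1) ≤ 2 * a + 2 * (n * b) := by omega
    rw [show n - 1 = 2 * a + 2 * b + 1 by omega] at hfinal
    rw [hn] at hfinal
    exact arith_contra a b hfinal
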